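/- Let ν ≥ 1 be an integer and let λ, γ, μ be real numbers. Define ι₂ : ℝ^ν → E, where E = EuclideanSpace ℝ (Fin ν × Fin 3), by ι₂(t)(i, 0) = λ·tᵢ, ι₂(t)(i, 1) = γ·cos(μ·tᵢ), ι₂(t)(i, 2) = γ·sin(μ·tᵢ). Then for every t ∈ ℝ^ν and every v ∈ ℝ^ν, ‖(iteratedFDeriv ℝ 2 ι₂ t)(v, v)‖² = γ²·μ⁴·∑_{i} vᵢ⁴. -/

import Mathlib

open scoped BigOperators

/-- The coiling map `ι₂ : ℝ^ν → ℝ^{ν×3}`,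
`t ↦ (λ tᵢ, γ cos(μ tᵢ), γ sin(μ tᵢ))_{i}`. -/
noncomputable def coilingMap (ν : ℕ) (l γ μ : ℝ) (t : EuclideanSpace ℝ (Fin ν)) :
    EuclideanSpace ℝ (Fin ν × Fin 3) :=
  (WithLp.equiv 2 (Fin ν × Fin 3 → ℝ)).symm fun p =>
    ![l * t p.1, γ * Real.cos (μ * t p.1), γ * Real.sin (μ * t p.1)] p.2

lemma coil_h_contDiff (l γ μ : ℝ) (j : Fin 3) :
    ContDiff ℝ 2 (fun s : ℝ => ![l * s, γ * Real.cos (μ * s), γ * Real.sin (μ * s)] j) := by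
  fin_cases j <;> simp
  · exact contDiff_const.mul contDiff_id
  · exact contDiff_const.mul (Real.contDiff_cos.comp (contDiff_const.mul contDiff_id))
  · exact contDiff_const.mul (Real.contDiff_sin.comp (contDiff_const.mul contDiff_id))

lemma coil_h_deriv2 (l γ μ : ℝ) (j : Fin 3) (x : ℝ) :
    iteratedDeriv 2 (fun s : ℝ => ![l * s, γ * Real.cos (μ * s), γ * Real.sin (μ * s)] j) x =
      ![0, -(γ * μ ^ 2 * Real.cos (μ * x)), -(γ * μ ^ 2 * Real.sin (μ * x))] j := by
  have hc1 : deriv (fun s : ℝ => γ * Real.cos (μ * s))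
      = fun s => -(γ * μ * Real.sin (μ * s)) := by
    funext s
    have : HasDerivAt (fun s : ℝ => γ * Real.cos (μ * s))
        (-(γ * μ * Real.sin (μ * s))) s := by
      have := ((Real.hasDerivAt_cos (μ * s)).comp s
        ((hasDerivAt_id s).const_mul μ)).const_mul γ
      exact this.congr_deriv (by ring)
    exact this.deriv
  have hs1 : deriv (fun s : ℝ => γ * Real.sin (μ * s))
      = fun s => γ * μ * Real.cos (μ * s) := by
    funext s
    have : HasDerivAt (fun s : ℝ => γ * Real.sin (μ * s))
        (γ * μ * Real.cos (μ * s)) s := by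
      have := ((Real.hasDerivAt_sin (μ * s)).comp s
        ((hasDerivAt_id s).const_mul μ)).const_mul γ
      exact this.congr_deriv (by ring)
    exact this.deriv
  fin_cases j
  · show iteratedDeriv 2 (fun s : ℝ => l * s) x = 0
    simp only [iteratedDeriv_succ, iteratedDeriv_zero]
    rw [show deriv (fun s : ℝ => l * s) = fun _ => l from funext fun s =>
      ((hasDerivAt_id s).const_mul l).deriv.trans (mul_one l)]
    simp
  · show iteratedDeriv 2 (fun s : ℝ => γ * Real.cos (μ * s)) x
        = -(γ * μ ^ 2 * Real.cos (μ * x))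
    simp only [iteratedDeriv_succ, iteratedDeriv_zero]
    rw [hc1]
    have : HasDerivAt (fun s : ℝ => -(γ * μ * Real.sin (μ * s)))
        (-(γ * μ ^ 2 * Real.cos (μ * x))) x := by
      have := (((Real.hasDerivAt_sin (μ * x)).comp x
        ((hasDerivAt_id x).const_mul μ)).const_mul (γ * μ)).neg
      exact this.congr_deriv (by ring)
    exact this.deriv
  · show iteratedDeriv 2 (fun s : ℝ => γ * Real.sin (μ * s)) x
        = -(γ * μ ^ 2 * Real.sin (μ * x))
    simp only [iteratedDeriv_succ, iteratedDeriv_zero]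
    rw [hs1]
    have : HasDerivAt (fun s : ℝ => γ * μ * Real.cos (μ * s))
        (-(γ * μ ^ 2 * Real.sin (μ * x))) x := by
      have := ((Real.hasDerivAt_cos (μ * x)).comp x
        ((hasDerivAt_id x).const_mul μ)).const_mul (γ * μ)
      exact this.congr_deriv (by ring)
    exact this.deriv

/-- The diagonal of the second fundamental form of the coiling map:
`‖D²ι₂(t)[v,v]‖² = γ²μ⁴ ∑ᵢ vᵢ⁴`. -/
theorem coilingMap_second_derivative_sq (ν : ℕ) (hν : 1 ≤ ν) (l γ μ : ℝ)
    (t v : EuclideanSpace ℝ (Fin ν)) :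
    ‖(iteratedFDeriv ℝ 2 (coilingMap ν l γ μ) t) ![v, v]‖ ^ 2 =
      γ ^ 2 * μ ^ 4 * ∑ i : Fin ν, (v i) ^ 4 := by
  set f := coilingMap ν l γ μ
  set h : Fin 3 → ℝ → ℝ := fun j s => ![l * s, γ * Real.cos (μ * s), γ * Real.sin (μ * s)] j
    with hh
  have hcd : ContDiff ℝ 2 f := by
    rw [contDiff_euclidean]
    intro p
    exact (coil_h_contDiff l γ μ p.2).comp (EuclideanSpace.proj (𝕜 := ℝ) p.1).contDiff
  have key : ∀ p : Fin ν × Fin 3,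
      (iteratedFDeriv ℝ 2 f t ![v, v]) p =
        ![0, -(γ * μ ^ 2 * Real.cos (μ * t p.1)), -(γ * μ ^ 2 * Real.sin (μ * t p.1))] p.2
          * (v p.1) ^ 2 := by
    intro p
    have h1 : (iteratedFDeriv ℝ 2 f t ![v, v]) p =
        iteratedFDeriv ℝ 2 ((EuclideanSpace.proj (𝕜 := ℝ) p) ∘ f) t ![v, v] := by
      rw [ContinuousLinearMap.iteratedFDeriv_comp_left _ hcd.contDiffAt le_rfl]
      rfl
    have h2 : (EuclideanSpace.proj (𝕜 := ℝ) p) ∘ f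
        = (h p.2) ∘ (EuclideanSpace.proj (𝕜 := ℝ) p.1) := rfl
    rw [h1, h2, ContinuousLinearMap.iteratedFDeriv_comp_right _
      (coil_h_contDiff l γ μ p.2) t le_rfl]
    have h3 : (iteratedFDeriv ℝ 2 (h p.2)
          (EuclideanSpace.proj (𝕜 := ℝ) p.1 t)).compContinuousLinearMap
          (fun _ => EuclideanSpace.proj (𝕜 := ℝ) p.1) ![v, v]
        = iteratedFDeriv ℝ 2 (h p.2) (t p.1) (fun j => (![v, v] j) p.1) := rfl
    rw [h3, iteratedFDeriv_apply_eq_iteratedDeriv_mul_prod, coil_h_deriv2]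
    have : (∏ j : Fin 2, (![v, v] j) p.1) = (v p.1) ^ 2 := by
      simp [Fin.prod_univ_two, sq]
    rw [this]
    simp [mul_comm]
  have hnorm : ‖iteratedFDeriv ℝ 2 f t ![v, v]‖ ^ 2
      = ∑ p : Fin ν × Fin 3, ((iteratedFDeriv ℝ 2 f t ![v, v]) p) ^ 2 := by
    rw [EuclideanSpace.norm_eq, Real.sq_sqrt (by positivity)]
    simp [Real.norm_eq_abs, sq_abs]
  rw [hnorm]
  simp only [key]
  rw [Fintype.sum_prod_type]
  rw [Finset.mul_sum]
  refine Finset.sum_congr rfl fun i _ => ?_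
  rw [Fin.sum_univ_three]
  simp only [Matrix.cons_val_zero, Matrix.cons_val_one, Matrix.head_cons,
    Matrix.cons_val_two, Matrix.tail_cons]
  have := Real.sin_sq_add_cos_sq (μ * t i)
  nlinarith [this, sq_nonneg (v i)]
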